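/- An n-dimensional evolution algebra E over ℝ with structural constants matrix M = (a_{ij}) is baric (admits a nonzero multiplicative linear form σ: E → ℝ) if and only if there exists an index i₀ such that a_{i₀i₀} ≠ 0 and a_{ii₀} = 0 for all i ≠ i₀. Moreover, in this case σ(x) = a_{i₀i₀}·x_{i₀} is a weight function. -/

import Mathlib

/-- Multiplication of the evolution algebra on `Fin n → ℝ` with structural
constants matrix `a` : `(x ⋆ y)_j = ∑ i, a i j * x i * y i`. -/
def evolMul (n : ℕ) (a : Fin n → Fin n → ℝ) (x y : Fin n → ℝ) : Fin n → ℝ :=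
  fun j => ∑ i, a i j * (x i * y i)

lemma baric_of_idx (n : ℕ) (a : Fin n → Fin n → ℝ) (i0 : Fin n)
    (h : a i0 i0 ≠ 0 ∧ ∀ i : Fin n, i ≠ i0 → a i i0 = 0) :
    ∃ σ : (Fin n → ℝ) →ₗ[ℝ] ℝ, σ ≠ 0 ∧
        (∀ x y : Fin n → ℝ, σ (evolMul n a x y) = σ x * σ y) ∧
        ∀ x : Fin n → ℝ, σ x = a i0 i0 * x i0 := by
  obtain ⟨hne, hz⟩ := h
  refine ⟨a i0 i0 • LinearMap.proj i0, ?_, ?_, ?_⟩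
  · intro h0
    have := congrFun (congrArg DFunLike.coe h0) (Pi.single i0 1)
    simp at this
    exact hne this
  · intro x y
    simp only [LinearMap.smul_apply, LinearMap.proj_apply, smul_eq_mul, evolMul]
    have : ∑ i, a i i0 * (x i * y i) = a i0 i0 * (x i0 * y i0) := by
      refine Finset.sum_eq_single i0 (fun i _ hi => ?_) (by simp)
      rw [hz i hi]; ring
    rw [this]; ring
  · intro x; simp [mul_comm]

theorem baric_criterion (n : ℕ) (a : Fin n → Fin n → ℝ) :
    ((∃ σ : (Fin n → ℝ) →ₗ[ℝ] ℝ, σ ≠ 0 ∧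
        ∀ x y : Fin n → ℝ, σ (evolMul n a x y) = σ x * σ y) ↔
      ∃ i0 : Fin n, a i0 i0 ≠ 0 ∧ ∀ i : Fin n, i ≠ i0 → a i i0 = 0) ∧
    (∀ i0 : Fin n, (a i0 i0 ≠ 0 ∧ ∀ i : Fin n, i ≠ i0 → a i i0 = 0) →
      ∃ σ : (Fin n → ℝ) →ₗ[ℝ] ℝ, σ ≠ 0 ∧
        (∀ x y : Fin n → ℝ, σ (evolMul n a x y) = σ x * σ y) ∧
        ∀ x : Fin n → ℝ, σ x = a i0 i0 * x i0) := by
  constructor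
  · constructor
    · rintro ⟨σ, hσ, hmul⟩
      set e : Fin n → (Fin n → ℝ) := fun i => Pi.single i 1 with he
      set c : Fin n → ℝ := fun i => σ (e i) with hc
      -- σ as a sum
      have hrep : ∀ x : Fin n → ℝ, σ x = ∑ i, x i * c i := by
        intro x
        have hx : x = ∑ i, x i • e i := by
          funext k
          simp [he, Pi.single_apply]
        have hx2 : ∀ k, ∑ j, x j * e j k = x k := by
          intro k; simp [he, Pi.single_apply]
        rw [hx]
        simp [hc, mul_comm, hx2]
      -- products of basis vectors
      have hprod : ∀ i j : Fin n, i ≠ j → c i * c j = 0 := by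
        intro i j hij
        have hz : evolMul n a (e i) (e j) = 0 := by
          funext k
          simp only [evolMul, he, Pi.zero_apply]
          refine Finset.sum_eq_zero fun m _ => ?_
          rcases eq_or_ne m i with rfl | hmi
          · rw [Pi.single_eq_of_ne hij]; ring
          · rw [Pi.single_eq_of_ne hmi]; ring
        have := hmul (e i) (e j)
        rw [hz] at this
        simpa [hc] using this.symm
      have hsq : ∀ i : Fin n, (∑ j, a i j * c j) = c i * c i := by
        intro i
        have hz : evolMul n a (e i) (e i) = fun k => a i k := by
          funext k
          simp only [evolMul, he, Pi.single_apply, mul_ite, ite_mul, mul_one, mul_zero,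
            zero_mul, one_mul, if_pos, ite_and]
          simp [Finset.sum_ite_eq']
        have := hmul (e i) (e i)
        rw [hz, hrep] at this
        exact this
      -- find i0
      have hex : ∃ i0, c i0 ≠ 0 := by
        by_contra hall
        push_neg at hall
        apply hσ
        ext x
        simp [hrep, hall]
      obtain ⟨i0, hi0⟩ := hex
      have hczero : ∀ i, i ≠ i0 → c i = 0 := by
        intro i hi
        have := hprod i i0 hi
        rcases mul_eq_zero.mp this with h | h
        · exact h
        · exact absurd h hi0
      have hkey : a i0 i0 * c i0 = c i0 * c i0 := by
        have := hsq i0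
        rwa [Finset.sum_eq_single i0 (fun j _ hj => by rw [hczero j hj]; ring)
          (by simp)] at this
      have hci0 : c i0 = a i0 i0 := by
        field_simp at hkey
        exact hkey.symm
      refine ⟨i0, by rw [← hci0]; exact hi0, fun i hi => ?_⟩
      have := hsq i
      rw [Finset.sum_eq_single i0 (fun j _ hj => by rw [hczero j hj]; ring)
        (by simp), hczero i hi] at this
      simp at this
      rcases this with h | h
      · exact h
      · exact absurd h hi0
    · rintro ⟨i0, h⟩
      obtain ⟨σ, h1, h2, _⟩ := baric_of_idx n a i0 h
      exact ⟨σ, h1, h2⟩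
  · exact fun i0 h => baric_of_idx n a i0 h
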